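/- arXiv:1904.07682 — 2 statements merged into one kernel-verified Lean document; each statement's English description precedes it below -/
import Mathlib

section
/- Let H be a graph on k vertices, let n ≥ 2, and let Γ be a graph on n vertices with emb(H,Γ) = emb(H,n). Then every vertex of Γ is contained in the image of at least (k/(n+k))·emb(H,n) embeddings H ↪ Γ. -/
universe u v

open Filter

/-- The Cayley graph of an additive abelian group `G` with connection set `Λ`:
distinct vertices `x y : G` are adjacent iff `x - y ∈ Λ` (for `Λ` with `Λ = -Λ`). -/
def cayleyGraph (G : Type u) [AddCommGroup G] (Λ : Set G) : SimpleGraph G where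
  Adj x y := x ≠ y ∧ x - y ∈ Λ ∧ y - x ∈ Λ
  symm := by
    constructor
    rintro x y ⟨h1, h2, h3⟩
    exact ⟨fun e => h1 e.symm, h3, h2⟩
  loopless := by
    constructor
    rintro x ⟨h1, -, -⟩
    exact h1 rfl

/-- `Λ` is a possible outcome of the random procedure: `0 ∉ Λ` and `Λ = -Λ`. -/
def IsSymmetricSubset {G : Type u} [AddCommGroup G] (Λ : Finset G) : Prop :=
  (0 : G) ∉ Λ ∧ ∀ g ∈ Λ, -g ∈ Λ

/-- The number of negation-pairs `{g, -g}` among the elements of `Λ`. -/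
noncomputable def pairCount {G : Type u} [AddCommGroup G] (Λ : Finset G) : ℕ :=
  letI := Classical.decEq G
  (Λ.image fun g => ({g, -g} : Finset G)).card

/-- The probability that the random procedure with parameter `p` (each pair
`{g, -g} ⊆ G \ {0}` is included independently with probability `p`) produces
exactly the symmetric set `Λ`. -/
noncomputable def lambdaWeight {G : Type u} [AddCommGroup G] [Fintype G] (p : ℝ)
    (Λ : Finset G) : ℝ :=
  letI := Classical.decEq G
  p ^ pairCount Λ * (1 - p) ^ (pairCount ((Finset.univ : Finset G).erase 0) - pairCount Λ)

open Classical in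
/-- The probability that the random set `Λ ⊆ G \ {0}` produced by the random procedure
with parameter `p` satisfies the predicate `P`. -/
noncomputable def lambdaProb (G : Type u) [AddCommGroup G] [Fintype G] (p : ℝ)
    (P : Finset G → Prop) : ℝ :=
  ∑ Λ : Finset G, if IsSymmetricSubset Λ ∧ P Λ then lambdaWeight p Λ else 0

/-- `emb(H, Γ)`: the number of graph embeddings of `H` into `Γ`. -/
noncomputable def embCount {α : Type u} {β : Type v} (H : SimpleGraph α)
    (Γ : SimpleGraph β) : ℕ :=
  Nat.card (H ↪g Γ)

/-- `emb(H, n)`: the maximum of `emb(H, Γ)` over all `n`-vertex graphs `Γ`. -/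
noncomputable def embMax {α : Type u} (H : SimpleGraph α) (n : ℕ) : ℕ :=
  sSup {m | ∃ Γ : SimpleGraph (Fin n), embCount H Γ = m}

/-- The number of vertex subsets of `Γ` inducing a copy of `H`. -/
noncomputable def indCount {α : Type u} {β : Type v} (H : SimpleGraph α)
    (Γ : SimpleGraph β) : ℕ :=
  Nat.card {s : Set β // Nonempty ((Γ.induce s) ≃g H)}

/-- `ind(H, n)`: the maximum number of induced copies of `H` in an `n`-vertex graph. -/
noncomputable def indMax {α : Type u} (H : SimpleGraph α) (n : ℕ) : ℕ :=
  sSup {m | ∃ Γ : SimpleGraph (Fin n), indCount H Γ = m}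

/-- `Γ` is a blow-up of `H` with (non-empty) parts `W i`, `i ∈ V(H)`. -/
def IsBlowupWith {α : Type u} {β : Type v} (H : SimpleGraph α) (Γ : SimpleGraph β)
    (W : α → Set β) : Prop :=
  (∀ i, (W i).Nonempty) ∧ (∀ x : β, ∃! i, x ∈ W i) ∧
    ∀ i j, i ≠ j → ∀ x ∈ W i, ∀ y ∈ W j, (Γ.Adj x y ↔ H.Adj i j)

/-- Auxiliary fuelled version of "balanced iterated blow-up". -/
def IsBIBAux {α : Type u} (H : SimpleGraph α) : ℕ → ∀ (β : Type v), SimpleGraph β → Prop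
  | 0, β, _ => Nat.card β < Nat.card α
  | n + 1, β, Γ =>
      Nat.card β < Nat.card α ∨
        ∃ W : α → Set β, IsBlowupWith H Γ W ∧
          (∀ i j, Nat.card (W i) ≤ Nat.card (W j) + 1) ∧
          ∀ i, IsBIBAux H n ↥(W i) (Γ.induce (W i))

/-- `Γ` is a balanced iterated blow-up of `H`: either `|V(Γ)| < |V(H)|`, or `Γ` is a
balanced blow-up of `H` each of whose parts induces a balanced iterated blow-up of `H`. -/
def IsBalancedIterBlowup {α : Type u} {β : Type v} (H : SimpleGraph α)
    (Γ : SimpleGraph β) : Prop :=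
  IsBIBAux H (Nat.card β + 1) β Γ

/-- `φ` is one of the `2k̃` rotations and reflections of a Cayley graph on `G`. -/
def IsRotOrRefl {G : Type u} [AddCommGroup G] (φ : G → G) : Prop :=
  (∃ g : G, ∀ x : G, φ x = x + g) ∨ ∃ g : G, ∀ x : G, φ x = -x + g

/-- A graph is prime if no subset `U` with `2 ≤ |U| < |V(H)|` is such that every vertex
outside `U` is complete to `U` or has no edges to `U`. -/
def IsPrimeGraph {α : Type u} (H : SimpleGraph α) : Prop :=
  ¬ ∃ U : Set α, 2 ≤ Nat.card U ∧ Nat.card U < Nat.card α ∧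
      ∀ x ∉ U, (∀ y ∈ U, H.Adj x y) ∨ ∀ y ∈ U, ¬ H.Adj x y

/-- A signature of `H`: distinct vertices outside `S` have distinct neighbourhoods in `S`. -/
def IsSignature {α : Type u} (H : SimpleGraph α) (S : Set α) : Prop :=
  ∀ v ∉ S, ∀ w ∉ S, v ≠ w → H.neighborSet v ∩ S ≠ H.neighborSet w ∩ S

/-- An `r`-super-signature of `H`. -/
def IsSuperSignature {α : Type u} (H : SimpleGraph α) (r : ℝ) (S : Set α) : Prop :=
  S.Nonempty ∧ ∀ v ∉ S, ∀ w ∉ S, v ≠ w →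
    r * (Nat.card S : ℝ) ≤
      (Nat.card ↥(symmDiff (H.neighborSet v) (H.neighborSet w) ∩ S) : ℝ)

/-- The Cayley graph `cayleyGraph G Λ` is `(q₀, δ₀)`-typical. -/
def IsTypical {G : Type u} [AddCommGroup G] [Fintype G] (Λ : Set G) (q₀ δ₀ : ℝ) : Prop :=
  (∀ v : G,
      q₀ * (Fintype.card G : ℝ) ≤ (Nat.card ((cayleyGraph G Λ).neighborSet v) : ℝ) ∧
        (Nat.card ((cayleyGraph G Λ).neighborSet v) : ℝ) ≤
          (1 - q₀) * (Fintype.card G : ℝ)) ∧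
    (∀ v w : G, v ≠ w →
      q₀ * (Fintype.card G : ℝ) ≤
        (Nat.card {u : G | u ≠ v ∧ u ≠ w ∧
          Xor' ((cayleyGraph G Λ).Adj u v) ((cayleyGraph G Λ).Adj u w)} : ℝ)) ∧
    (¬ ∃ X Y : Set G, Disjoint X Y ∧
      2 * (Fintype.card G : ℝ) ^ ((4 : ℝ) / 5) ≤ (Nat.card X : ℝ) ∧
      2 * (Fintype.card G : ℝ) ^ ((4 : ℝ) / 5) ≤ (Nat.card Y : ℝ) ∧
      ((∀ x ∈ X, ∀ y ∈ Y, (cayleyGraph G Λ).Adj x y) ∨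
        ∀ x ∈ X, ∀ y ∈ Y, ¬ (cayleyGraph G Λ).Adj x y)) ∧
    ∀ (X : Set G) (f : G → G),
      (1 - δ₀) * (Fintype.card G : ℝ) ≤ (Nat.card X : ℝ) →
      Set.InjOn f X →
      (∀ v ∈ X, ∀ w ∈ X, v ≠ w →
        ((cayleyGraph G Λ).Adj (f v) (f w) ↔ (cayleyGraph G Λ).Adj v w)) →
      ∃ φ : G → G, IsRotOrRefl φ ∧ Set.EqOn f φ X

/-- The induced subgraph of the Cayley graph `cayleyGraph G Λ` on the vertex set `K`
is a `(q, δ)`-reasonable induced subgraph. -/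
def IsReasonable {G : Type u} [AddCommGroup G] [Fintype G] (Λ K : Set G) (q δ : ℝ) : Prop :=
  IsPrimeGraph ((cayleyGraph G Λ).induce K) ∧
    (∀ v w : G, v ≠ w →
      q * (Nat.card K : ℝ) ≤
        (Nat.card {u : G | u ∈ K ∧ u ≠ v ∧ u ≠ w ∧
          Xor' ((cayleyGraph G Λ).Adj u v) ((cayleyGraph G Λ).Adj u w)} : ℝ)) ∧
    ∀ (X : Set G) (f : G → G),
      (1 - δ) * (Nat.card K : ℝ) ≤ (Nat.card X : ℝ) →
      Set.InjOn f X →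
      (∀ v ∈ X, ∀ w ∈ X, v ≠ w →
        ((cayleyGraph G Λ).Adj (f v) (f w) ↔ (cayleyGraph G Λ).Adj v w)) →
      ∃ φ : G → G, IsRotOrRefl φ ∧ Set.EqOn f φ X

/-- `E_ℓ(m) = m₁ ⋯ m_ℓ` where `⌈m/ℓ⌉ ≥ m₁ ≥ … ≥ m_ℓ ≥ ⌊m/ℓ⌋` and `m₁ + … + m_ℓ = m`. -/
def Epart (ℓ m : ℕ) : ℕ := (m / ℓ + 1) ^ (m % ℓ) * (m / ℓ) ^ (ℓ - m % ℓ)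

/-- The rotation `y ↦ y + g` of a Cayley graph on `G`. -/
def rotationMap {G : Type u} [AddCommGroup G] (g : G) : G → G := fun y => y + g

/-- The reflection `y ↦ -y + g` of a Cayley graph on `G`. -/
def reflectionMap {G : Type u} [AddCommGroup G] (g : G) : G → G := fun y => -y + g

/-- The family of the `2k̃` rotations and reflections, indexed by `Bool × G`. -/
def rotRefl {G : Type u} [AddCommGroup G] : Bool × G → G → G
  | (false, g) => rotationMap g
  | (true, g) => reflectionMap g


section Statement18Aux

variable {α β γ : Type}

private lemma finite_embGraph [Finite α] [Finite β] (H : SimpleGraph α) (Γ : SimpleGraph β) :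
    Finite (H ↪g Γ) :=
  Finite.of_injective (fun θ => (θ : α → β)) fun _ _ h => by
    ext v; exact congrFun h v

private lemma embCount_congr (H : SimpleGraph α) {Γ : SimpleGraph β} {Γ' : SimpleGraph γ}
    (e : Γ ≃g Γ') : embCount H Γ = embCount H Γ' :=
  Nat.card_congr
    { toFun := fun θ => e.toEmbedding.comp θ
      invFun := fun θ => e.symm.toEmbedding.comp θ
      left_inv := fun θ => by ext v; simp
      right_inv := fun θ => by ext v; simp }

private lemma embCount_le_embMax [Finite α] [Finite γ] (H : SimpleGraph α)
    (Γ' : SimpleGraph γ) {n : ℕ} (hγ : Nat.card γ = n) :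
    embCount H Γ' ≤ embMax H n := by
  have e : γ ≃ Fin n := Finite.equivFinOfCardEq hγ
  have hmem : embCount H Γ' ∈ {m | ∃ Γ : SimpleGraph (Fin n), embCount H Γ = m} :=
    ⟨Γ'.map e.toEmbedding, (embCount_congr H (SimpleGraph.Iso.map e Γ')).symm⟩
  refine le_csSup ⟨Nat.card (α ↪ Fin n), ?_⟩ hmem
  rintro m ⟨Γ₁, rfl⟩
  have : Finite (H ↪g Γ₁) := finite_embGraph H Γ₁
  exact Nat.card_le_card_of_injective (fun θ : H ↪g Γ₁ => θ.toEmbedding)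
    (fun a b h => DFunLike.coe_injective
      (by simpa [RelEmbedding.coe_toEmbedding] using congrArg DFunLike.coe h))

end Statement18Aux

/-- If `Γ` is an `n`-vertex graph (`n ≥ 2`) attaining
`emb(H, Γ) = emb(H, n)` for a `k`-vertex graph `H`, then every vertex of `Γ` is in the
image of at least `(k/(n+k)) emb(H, n)` embeddings `H ↪ Γ`. -/
theorem statement18 {α : Type} [Finite α] (H : SimpleGraph α) (k : ℕ)
    (hk : Nat.card α = k) (n : ℕ) (hn : 2 ≤ n) {β : Type} (Γ : SimpleGraph β)
    (hβ : Nat.card β = n) (hmax : embCount H Γ = embMax H n) (z : β) :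
    (k : ℝ) / ((n : ℝ) + (k : ℝ)) * (embMax H n : ℝ) ≤
      (Nat.card {θ : H ↪g Γ // ∃ v : α, θ v = z} : ℝ) := by
  classical
  have hβpos : 0 < Nat.card β := by omega
  have hβfin : Finite β := (Nat.card_pos_iff.mp hβpos).2
  have hβne : Nonempty β := (Nat.card_pos_iff.mp hβpos).1
  letI : Fintype β := Fintype.ofFinite β
  haveI : Finite (H ↪g Γ) := finite_embGraph H Γ
  letI : Fintype (H ↪g Γ) := Fintype.ofFinite _
  letI : Fintype α := Fintype.ofFinite α
  set N := embMax H n with hN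
  set A : Finset (H ↪g Γ) := Finset.univ.filter (fun θ => ¬ ∃ v : α, θ v = z) with hA
  set dz : ℕ := Nat.card {θ : H ↪g Γ // ∃ v : α, θ v = z} with hdz
  have hdz' : dz = (Finset.univ.filter (fun θ : H ↪g Γ => ∃ v : α, θ v = z)).card := by
    rw [hdz, Nat.card_eq_fintype_card, Fintype.card_subtype]
  have hsplit : A.card + dz = N := by
    rw [hdz', hA, add_comm, Finset.card_filter_add_card_filter_not,
      Finset.card_univ, ← Nat.card_eq_fintype_card]
    exact hmax
  have hmemA : ∀ θ ∈ A, ¬ ∃ v : α, θ v = z := by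
    intro θ hθ
    rw [hA, Finset.mem_filter] at hθ
    exact hθ.2
  -- double counting
  set f : β → ℕ := fun y => (A.filter (fun θ => ∃ v : α, θ v = y)).card with hf
  have hsum : ∑ y : β, f y = k * A.card := by
    have himg : ∀ θ ∈ A, (Finset.univ.filter (fun y : β => ∃ v : α, θ v = y)).card = k := by
      intro θ _
      have h1 : Finset.univ.filter (fun y : β => ∃ v : α, θ v = y)
          = Finset.univ.image (θ : α → β) := by
        ext y
        simp [eq_comm]
      rw [h1, Finset.card_image_of_injective _ (RelEmbedding.injective θ),
        Finset.card_univ, ← Nat.card_eq_fintype_card, hk]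
    calc ∑ y : β, f y
        = ∑ y : β, ∑ θ ∈ A, if ∃ v : α, θ v = y then 1 else 0 :=
          Finset.sum_congr rfl fun y _ => Finset.card_filter _ _
      _ = ∑ θ ∈ A, ∑ y : β, if ∃ v : α, θ v = y then 1 else 0 := Finset.sum_comm
      _ = ∑ θ ∈ A, (Finset.univ.filter (fun y : β => ∃ v : α, θ v = y)).card :=
          Finset.sum_congr rfl fun θ _ => (Finset.card_filter _ _).symm
      _ = ∑ _θ ∈ A, k := Finset.sum_congr rfl himg
      _ = A.card * k := by rw [Finset.sum_const, smul_eq_mul]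
      _ = k * A.card := mul_comm _ _
  obtain ⟨y, -, hy⟩ := Finset.exists_max_image Finset.univ f Finset.univ_nonempty
  have h3 : k * A.card ≤ n * f y := by
    rw [← hsum]
    have := Finset.sum_le_card_nsmul Finset.univ f (f y) (fun x _ => hy x (Finset.mem_univ x))
    rwa [Finset.card_univ, ← Nat.card_eq_fintype_card, hβ, smul_eq_mul] at this
  -- the cloned graph
  set r : β → β := fun x => if x = z then y else x with hr
  set Γ' : SimpleGraph β :=
    { Adj := fun a b => a ≠ b ∧ Γ.Adj (r a) (r b)
      symm := by constructor; rintro a b ⟨h1, h2⟩; exact ⟨Ne.symm h1, h2.symm⟩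
      loopless := by constructor; rintro a ⟨h1, -⟩; exact h1 rfl } with hΓ'
  have hΓ'adj : ∀ a b : β, Γ'.Adj a b ↔ a ≠ b ∧ Γ.Adj (r a) (r b) := fun a b => Iff.rfl
  have hrA : ∀ (θ : H ↪g Γ), (¬ ∃ v : α, θ v = z) → ∀ v : α, r (θ v) = θ v := by
    intro θ hθ v
    exact if_neg fun h => hθ ⟨v, h⟩
  have hrB : ∀ x : β, x ≠ z → r (Equiv.swap y z x) = x := by
    intro x hx
    rcases eq_or_ne x y with rfl | hxy
    · rw [Equiv.swap_apply_left, hr]; simp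
    · rw [Equiv.swap_apply_of_ne_of_ne hxy hx]
      exact if_neg hx
  set B : Finset (H ↪g Γ) := A.filter (fun θ => ∃ v : α, θ v = y) with hB
  have hmemB : ∀ θ ∈ B, (∃ v : α, θ v = y) ∧ ¬ ∃ v : α, θ v = z := by
    intro θ hθ
    rw [hB, Finset.mem_filter] at hθ
    exact ⟨hθ.2, hmemA θ hθ.1⟩
  have hfy : f y = B.card := rfl
  have key : A.card + f y ≤ N := by
    let FA : {θ : H ↪g Γ // θ ∈ A} → (H ↪g Γ') := fun θ =>
      { toEmbedding := (θ : H ↪g Γ).toEmbedding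
        map_rel_iff' := by
          intro a b
          show Γ'.Adj ((θ : H ↪g Γ) a) ((θ : H ↪g Γ) b) ↔ H.Adj a b
          rw [hΓ'adj]
          constructor
          · rintro ⟨-, h2⟩
            rw [hrA θ.1 (hmemA θ.1 θ.2) a, hrA θ.1 (hmemA θ.1 θ.2) b] at h2
            exact (θ.1).map_adj_iff.mp h2
          · intro h
            refine ⟨(θ.1).injective.ne h.ne, ?_⟩
            rw [hrA θ.1 (hmemA θ.1 θ.2) a, hrA θ.1 (hmemA θ.1 θ.2) b]
            exact (θ.1).map_adj_iff.mpr h }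
    let FB : {θ : H ↪g Γ // θ ∈ B} → (H ↪g Γ') := fun θ =>
      { toEmbedding := (θ : H ↪g Γ).toEmbedding.trans (Equiv.swap y z).toEmbedding
        map_rel_iff' := by
          intro a b
          have hne : ∀ v : α, (θ.1) v ≠ z := fun v h => (hmemB θ.1 θ.2).2 ⟨v, h⟩
          show Γ'.Adj (Equiv.swap y z ((θ : H ↪g Γ) a)) (Equiv.swap y z ((θ : H ↪g Γ) b)) ↔
            H.Adj a b
          rw [hΓ'adj]
          rw [hrB _ (hne a), hrB _ (hne b)]
          constructor
          · rintro ⟨-, h2⟩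
            exact (θ.1).map_adj_iff.mp h2
          · intro h
            exact ⟨fun hc => h.ne ((θ.1).injective ((Equiv.swap y z).injective hc)),
              (θ.1).map_adj_iff.mpr h⟩ }
    have hFA : ∀ θ v, FA θ v = (θ.1 : H ↪g Γ) v := fun θ v => rfl
    have hFB : ∀ θ v, FB θ v = Equiv.swap y z ((θ.1 : H ↪g Γ) v) := fun θ v => rfl
    have hinj : Function.Injective (Sum.elim FA FB) := by
      rintro (⟨θ₁, h₁⟩ | ⟨θ₁, h₁⟩) (⟨θ₂, h₂⟩ | ⟨θ₂, h₂⟩) h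
      · simp only [Sum.elim_inl] at h
        refine congrArg Sum.inl (Subtype.ext ?_)
        ext v
        have := DFunLike.congr_fun h v
        rwa [hFA, hFA] at this
      · simp only [Sum.elim_inl, Sum.elim_inr] at h
        exfalso
        obtain ⟨v, hv⟩ := (hmemB θ₂ h₂).1
        have := DFunLike.congr_fun h v
        rw [hFA, hFB, hv, Equiv.swap_apply_left] at this
        exact hmemA θ₁ h₁ ⟨v, this⟩
      · simp only [Sum.elim_inl, Sum.elim_inr] at h
        exfalso
        obtain ⟨v, hv⟩ := (hmemB θ₁ h₁).1
        have := DFunLike.congr_fun h v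
        rw [hFA, hFB, hv, Equiv.swap_apply_left] at this
        exact hmemA θ₂ h₂ ⟨v, this.symm⟩
      · simp only [Sum.elim_inr] at h
        refine congrArg Sum.inr (Subtype.ext ?_)
        ext v
        have := DFunLike.congr_fun h v
        rw [hFB, hFB] at this
        exact (Equiv.swap y z).injective this
    haveI : Finite (H ↪g Γ') := finite_embGraph H Γ'
    have hle := Nat.card_le_card_of_injective _ hinj
    rw [Nat.card_sum, Nat.card_eq_fintype_card, Nat.card_eq_fintype_card,
      Fintype.card_coe, Fintype.card_coe] at hle
    calc A.card + f y = A.card + B.card := by rw [hfy]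
      _ ≤ Nat.card (H ↪g Γ') := hle
      _ = embCount H Γ' := rfl
      _ ≤ N := embCount_le_embMax H Γ' hβ
  -- conclude
  have hfydz : f y ≤ dz := by omega
  have hnat : k * N ≤ (n + k) * dz := by
    calc k * N = k * A.card + k * dz := by rw [← hsplit, Nat.mul_add]
      _ ≤ n * f y + k * dz := by exact Nat.add_le_add_right h3 _
      _ ≤ n * dz + k * dz := by exact Nat.add_le_add_right (Nat.mul_le_mul_left n hfydz) _
      _ = (n + k) * dz := (Nat.add_mul n k dz).symm
  have hR : (k : ℝ) * N ≤ ((n : ℝ) + k) * dz := by exact_mod_cast hnat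
  have hpos : (0 : ℝ) < (n : ℝ) + k := by
    have : (2 : ℝ) ≤ (n : ℝ) := by exact_mod_cast hn
    positivity
  rw [div_mul_eq_mul_div, div_le_iff₀ hpos]
  calc (k : ℝ) * N ≤ ((n : ℝ) + k) * dz := hR
    _ = (dz : ℝ) * ((n : ℝ) + k) := mul_comm _ _
end

section
/- Let H be a graph on k vertices and let m ≥ 2 be an integer. Then (k/(m−1))·emb(H,m−1) ≤ emb(H,m) − emb(H,m−1) ≤ (k/m)·emb(H,m). -/
universe u v

open Filter

set_option linter.unusedSectionVars false

section S19Aux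

variable {α β γ : Type} [Finite α] (H : SimpleGraph α)

lemma s19_finite_emb (Γ : SimpleGraph β) [Finite β] : Finite (H ↪g Γ) :=
  Finite.of_injective (fun f => (f : α → β)) DFunLike.coe_injective

lemma s19_embCount_congr {Γ : SimpleGraph β} {Γ' : SimpleGraph γ} (e : Γ ≃g Γ') :
    embCount H Γ = embCount H Γ' :=
  Nat.card_congr
    ⟨fun f => e.toEmbedding.comp f, fun f => e.symm.toEmbedding.comp f,
      fun f => by ext i; simp, fun f => by ext i; simp⟩

lemma s19_bddAbove (n : ℕ) :
    BddAbove {m | ∃ Γ : SimpleGraph (Fin n), embCount H Γ = m} := by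
  refine ⟨Nat.card (α → Fin n), ?_⟩
  rintro x ⟨Γ', rfl⟩
  exact Nat.card_le_card_of_injective (fun f : H ↪g Γ' => (f : α → Fin n))
    DFunLike.coe_injective

lemma s19_embCount_le_embMax [Finite β] (Γ : SimpleGraph β) {n : ℕ}
    (h : Nat.card β = n) : embCount H Γ ≤ embMax H n := by
  have e : β ≃ Fin n := Finite.equivFinOfCardEq h
  exact le_csSup (s19_bddAbove H n)
    ⟨Γ.map e.toEmbedding, (s19_embCount_congr H (SimpleGraph.Iso.map e Γ)).symm⟩

lemma s19_exists_embMax (n : ℕ) :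
    ∃ Γ : SimpleGraph (Fin n), embCount H Γ = embMax H n :=
  Nat.sSup_mem (s := {m | ∃ Γ : SimpleGraph (Fin n), embCount H Γ = m})
    ⟨embCount H (⊥ : SimpleGraph (Fin n)), ⊥, rfl⟩ (s19_bddAbove H n)

end S19Aux

section S19Upper

open Finset

variable {α : Type} [Finite α] (H : SimpleGraph α)

def s19_avoid_equiv {β : Type} (Γ : SimpleGraph β) (v : β) :
    {f : H ↪g Γ // ∀ i, f i ≠ v} ≃ (H ↪g Γ.induce ({v}ᶜ : Set β)) where
  toFun f := ⟨⟨fun i => ⟨f.1 i, f.2 i⟩,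
      fun i j h => f.1.injective (congrArg Subtype.val h)⟩,
    f.1.map_rel_iff⟩
  invFun g := ⟨(SimpleGraph.Embedding.induce ({v}ᶜ : Set β)).comp g, fun i => (g i).2⟩
  left_inv f := by ext i; rfl
  right_inv g := by ext i; rfl

lemma s19_upper {m k : ℕ} (hk : Nat.card α = k) (Γ : SimpleGraph (Fin m)) :
    (m - k) * embCount H Γ ≤ m * embMax H (m - 1) := by
  classical
  haveI := Fintype.ofFinite α
  haveI : Finite (H ↪g Γ) := s19_finite_emb H Γ
  haveI := Fintype.ofFinite (H ↪g Γ)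
  have hkα : Fintype.card α = k := by rw [← Nat.card_eq_fintype_card, hk]
  -- counting identity
  have key : ∑ v : Fin m,
      ((univ : Finset (H ↪g Γ)).filter fun f => ∀ i, f i ≠ v).card
      = (m - k) * Fintype.card (H ↪g Γ) := by
    simp only [Finset.card_filter]
    rw [Finset.sum_comm]
    have hfix : ∀ f : H ↪g Γ,
        (∑ v : Fin m, if ∀ i, f i ≠ v then 1 else 0) = m - k := by
      intro f
      rw [← Finset.card_filter]
      have himg : ((univ : Finset (Fin m)).filter fun v => ∀ i, f i ≠ v)
          = ((univ : Finset α).image fun i => f i)ᶜ := by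
        ext v
        simp [eq_comm]
      rw [himg, Finset.card_compl, Finset.card_image_of_injective _ f.injective,
        Finset.card_univ, Fintype.card_fin, hkα]
    rw [Finset.sum_congr rfl fun f _ => hfix f, Finset.sum_const, Finset.card_univ,
      smul_eq_mul, mul_comm]
  have hcompl : ∀ v : Fin m, Nat.card ({v}ᶜ : Set (Fin m)) = m - 1 := by
    intro v
    rw [Nat.card_eq_fintype_card]
    simp only [Fintype.card_subtype, Set.mem_compl_iff, Set.mem_singleton_iff,
      Finset.filter_not, Finset.filter_eq', if_pos (Finset.mem_univ v)]
    rw [Finset.card_sdiff_of_subset (by simp)]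
    simp
  have hle : ∀ v : Fin m,
      ((univ : Finset (H ↪g Γ)).filter fun f => ∀ i, f i ≠ v).card
        ≤ embMax H (m - 1) := by
    intro v
    have h1 : ((univ : Finset (H ↪g Γ)).filter fun f => ∀ i, f i ≠ v).card
        = embCount H (Γ.induce ({v}ᶜ : Set (Fin m))) := by
      rw [← Fintype.card_subtype]
      rw [embCount, Nat.card_congr (s19_avoid_equiv H Γ v).symm, Nat.card_eq_fintype_card]
    rw [h1]
    exact s19_embCount_le_embMax H _ (hcompl v)
  calc (m - k) * embCount H Γ
      = ∑ v : Fin m, ((univ : Finset (H ↪g Γ)).filter fun f => ∀ i, f i ≠ v).card := by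
        rw [key, embCount, Nat.card_eq_fintype_card]
    _ ≤ ∑ _v : Fin m, embMax H (m - 1) := Finset.sum_le_sum fun v _ => hle v
    _ = m * embMax H (m - 1) := by rw [Finset.sum_const, Finset.card_univ, Fintype.card_fin, smul_eq_mul]

end S19Upper

section S19Lower

open Finset

variable {α : Type} [Finite α] (H : SimpleGraph α)

/-- Clone the vertex `v₀` of `Γ` as a non-adjacent twin (the new vertex is `none`). -/
def s19_clone {β : Type} (Γ : SimpleGraph β) (v₀ : β) : SimpleGraph (Option β) where
  Adj x y := match x, y with
    | some a, some b => Γ.Adj a b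
    | some a, none => Γ.Adj a v₀
    | none, some b => Γ.Adj v₀ b
    | none, none => False
  symm := by
    constructor
    rintro (_ | a) (_ | b) h
    · exact h
    · exact h.symm
    · exact h.symm
    · exact h.symm
  loopless := by
    constructor
    rintro (_ | a) h
    · exact h
    · exact Γ.loopless.irrefl a h

def s19_cloneEmb1 {β : Type} {Γ : SimpleGraph β} (v₀ : β) (f : H ↪g Γ) :
    H ↪g s19_clone Γ v₀ :=
  ⟨⟨fun i => some (f i), fun i j h => f.injective (Option.some_injective _ h)⟩,
    f.map_rel_iff⟩

def s19_cloneEmb2 {β : Type} [DecidableEq β] {Γ : SimpleGraph β} (v₀ : β) (f : H ↪g Γ) :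
    H ↪g s19_clone Γ v₀ where
  toFun i := if f i = v₀ then none else some (f i)
  inj' i j hij := by
    by_cases h1 : f i = v₀ <;> by_cases h2 : f j = v₀ <;>
      simp only [h1, h2, if_pos, if_neg, if_true, if_false] at hij
    · exact f.injective (h1.trans h2.symm)
    · exact absurd hij (by simp)
    · exact absurd hij (by simp)
    · exact f.injective (Option.some_injective _ hij)
  map_rel_iff' := by
    intro i j
    show (s19_clone Γ v₀).Adj (if f i = v₀ then none else some (f i))
      (if f j = v₀ then none else some (f j)) ↔ H.Adj i j
    by_cases h1 : f i = v₀ <;> by_cases h2 : f j = v₀ <;>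
      simp only [Function.Embedding.coeFn_mk, h1, h2, if_pos, if_neg, if_true, if_false]
    · have hij : i = j := f.injective (h1.trans h2.symm)
      subst hij
      constructor
      · exact fun h => h.elim
      · exact fun h => (H.loopless.irrefl i h).elim
    · show Γ.Adj v₀ (f j) ↔ H.Adj i j
      rw [← h1]; exact f.map_rel_iff
    · show Γ.Adj (f i) v₀ ↔ H.Adj i j
      rw [← h2]; exact f.map_rel_iff
    · exact f.map_rel_iff

lemma s19_clone_card {β : Type} [Finite β] [DecidableEq β] (Γ : SimpleGraph β) (v₀ : β) :
    embCount H Γ + Nat.card {f : H ↪g Γ // ∃ i, f i = v₀}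
      ≤ embCount H (s19_clone Γ v₀) := by
  haveI : Fintype β := Fintype.ofFinite β
  haveI : Finite (H ↪g Γ) := s19_finite_emb H Γ
  haveI : Finite (H ↪g s19_clone Γ v₀) := s19_finite_emb H (s19_clone Γ v₀)
  rw [embCount, embCount, ← Nat.card_sum]
  refine Nat.card_le_card_of_injective
    (Sum.elim (s19_cloneEmb1 H v₀) fun f => s19_cloneEmb2 H v₀ f.1) ?_
  rintro (f | ⟨f, i₀, hi₀⟩) (g | ⟨g, j₀, hj₀⟩) hfg
  · simp only [Sum.elim_inl] at hfg
    congr 1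
    ext i
    have := DFunLike.congr_fun hfg i
    exact Option.some_injective _ this
  · exfalso
    have := DFunLike.congr_fun hfg j₀
    simp only [Sum.elim_inl, Sum.elim_inr] at this
    rw [show ((s19_cloneEmb2 H v₀ g) j₀ = none) from if_pos hj₀] at this
    exact Option.some_ne_none _ this
  · exfalso
    have := DFunLike.congr_fun hfg i₀
    simp only [Sum.elim_inl, Sum.elim_inr] at this
    rw [show ((s19_cloneEmb2 H v₀ f) i₀ = none) from if_pos hi₀] at this
    exact Option.some_ne_none _ this.symm
  · simp only [Sum.elim_inr] at hfg
    congr 1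
    ext i
    have h := DFunLike.congr_fun hfg i
    show f i = g i
    by_cases h1 : f i = v₀ <;> by_cases h2 : g i = v₀
    · rw [h1, h2]
    · rw [show ((s19_cloneEmb2 H v₀ f) i = none) from if_pos h1,
        show ((s19_cloneEmb2 H v₀ g) i = some (g i)) from if_neg h2] at h
      exact absurd h (by simp)
    · rw [show ((s19_cloneEmb2 H v₀ f) i = some (f i)) from if_neg h1,
        show ((s19_cloneEmb2 H v₀ g) i = none) from if_pos h2] at h
      exact absurd h (by simp)
    · rw [show ((s19_cloneEmb2 H v₀ f) i = some (f i)) from if_neg h1,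
        show ((s19_cloneEmb2 H v₀ g) i = some (g i)) from if_neg h2] at h
      exact Option.some_injective _ h

lemma s19_lower {n k : ℕ} (hk : Nat.card α = k) (hn : 1 ≤ n) (Γ : SimpleGraph (Fin n)) :
    (n + k) * embCount H Γ ≤ n * embMax H (n + 1) := by
  classical
  haveI := Fintype.ofFinite α
  haveI : Finite (H ↪g Γ) := s19_finite_emb H Γ
  haveI := Fintype.ofFinite (H ↪g Γ)
  have hkα : Fintype.card α = k := by rw [← Nat.card_eq_fintype_card, hk]
  set t : Fin n → ℕ := fun v => ((univ : Finset (H ↪g Γ)).filter fun f => ∃ i, f i = v).card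
    with ht
  -- double counting
  have key : ∑ v : Fin n, t v = k * Fintype.card (H ↪g Γ) := by
    simp only [ht, Finset.card_filter]
    rw [Finset.sum_comm]
    have hfix : ∀ f : H ↪g Γ, (∑ v : Fin n, if ∃ i, f i = v then 1 else 0) = k := by
      intro f
      rw [← Finset.card_filter]
      have himg : ((univ : Finset (Fin n)).filter fun v => ∃ i, f i = v)
          = (univ : Finset α).image fun i => f i := by
        ext v; simp [eq_comm]
      rw [himg, Finset.card_image_of_injective _ f.injective, Finset.card_univ, hkα]
    rw [Finset.sum_congr rfl fun f _ => hfix f, Finset.sum_const, Finset.card_univ,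
      smul_eq_mul, mul_comm]
  -- choose a popular vertex
  haveI : NeZero n := ⟨Nat.one_le_iff_ne_zero.mp hn⟩
  obtain ⟨v₀, -, hv₀⟩ := Finset.exists_max_image (univ : Finset (Fin n)) t ⟨0, mem_univ 0⟩
  have hsum : k * Fintype.card (H ↪g Γ) ≤ n * t v₀ := by
    rw [← key]
    calc ∑ v : Fin n, t v ≤ ∑ _v : Fin n, t v₀ :=
          Finset.sum_le_sum fun v _ => hv₀ v (mem_univ v)
      _ = n * t v₀ := by rw [Finset.sum_const, Finset.card_univ, Fintype.card_fin, smul_eq_mul]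
  have htcard : t v₀ = Nat.card {f : H ↪g Γ // ∃ i, f i = v₀} := by
    rw [Nat.card_eq_fintype_card, Fintype.card_subtype]
  have hclone : embCount H Γ + t v₀ ≤ embCount H (s19_clone Γ v₀) := by
    rw [htcard]; exact s19_clone_card H Γ v₀
  have hmax : embCount H (s19_clone Γ v₀) ≤ embMax H (n + 1) := by
    refine s19_embCount_le_embMax H _ ?_
    rw [Nat.card_eq_fintype_card, Fintype.card_option, Fintype.card_fin]
  have hE : embCount H Γ = Fintype.card (H ↪g Γ) := Nat.card_eq_fintype_card
  calc (n + k) * embCount H Γ = n * embCount H Γ + k * embCount H Γ := by ring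
    _ ≤ n * embCount H Γ + n * t v₀ := by
        rw [hE]; exact Nat.add_le_add_left hsum _
    _ = n * (embCount H Γ + t v₀) := by ring
    _ ≤ n * embCount H (s19_clone Γ v₀) := Nat.mul_le_mul_left _ hclone
    _ ≤ n * embMax H (n + 1) := Nat.mul_le_mul_left _ hmax

end S19Lower

/-- For a `k`-vertex graph `H` and `m ≥ 2`:
`(k/(m-1)) emb(H, m-1) ≤ emb(H, m) - emb(H, m-1) ≤ (k/m) emb(H, m)`. -/
theorem statement19 {α : Type} [Finite α] (H : SimpleGraph α) (k : ℕ)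
    (hk : Nat.card α = k) (m : ℕ) (hm : 2 ≤ m) :
    (k : ℝ) / ((m : ℝ) - 1) * (embMax H (m - 1) : ℝ) ≤
        (embMax H m : ℝ) - (embMax H (m - 1) : ℝ) ∧
      (embMax H m : ℝ) - (embMax H (m - 1) : ℝ) ≤ (k : ℝ) / (m : ℝ) * (embMax H m : ℝ) := by
  classical
  obtain ⟨n, rfl⟩ : ∃ n, m = n + 1 := ⟨m - 1, by omega⟩
  have hn : 1 ≤ n := by omega
  simp only [Nat.add_sub_cancel]
  obtain ⟨Γ', hΓ'⟩ := s19_exists_embMax H n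
  obtain ⟨Γ, hΓ⟩ := s19_exists_embMax H (n + 1)
  have hA0 := s19_lower H hk hn Γ'
  rw [hΓ'] at hA0
  have hB0 := s19_upper H hk Γ
  rw [hΓ, Nat.add_sub_cancel] at hB0
  set E : ℝ := (embMax H (n + 1) : ℝ) with hE
  set E' : ℝ := (embMax H n : ℝ) with hE'
  have hE0 : 0 ≤ E := Nat.cast_nonneg _
  have hE'0 : 0 ≤ E' := Nat.cast_nonneg _
  have hnR : (1 : ℝ) ≤ (n : ℝ) := by exact_mod_cast hn
  have hnpos : (0 : ℝ) < (n : ℝ) := by linarith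
  have hn1pos : (0 : ℝ) < (n : ℝ) + 1 := by linarith
  have hA : ((n : ℝ) + k) * E' ≤ (n : ℝ) * E := by
    rw [hE, hE']; exact_mod_cast hA0
  have hcast : ((n : ℝ) + 1) - 1 = (n : ℝ) := by ring
  constructor
  · push_cast
    rw [hcast, div_mul_eq_mul_div, div_le_iff₀ hnpos]
    linarith
  · push_cast
    by_cases hkm : k ≤ n + 1
    · have hBR : ((n : ℝ) + 1 - k) * E ≤ ((n : ℝ) + 1) * E' := by
        have h2 := (Nat.cast_le (α := ℝ)).mpr hB0
        rw [Nat.cast_mul, Nat.cast_mul, Nat.cast_sub hkm] at h2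
        push_cast at h2
        rw [hE, hE']
        push_cast
        linarith
      rw [div_mul_eq_mul_div, le_div_iff₀ hn1pos]
      linarith
    · have hk1 : ((n : ℝ) + 1) ≤ (k : ℝ) := by exact_mod_cast (by omega : n + 1 ≤ k)
      have h1 : (1 : ℝ) ≤ (k : ℝ) / ((n : ℝ) + 1) := by
        rw [le_div_iff₀ hn1pos]; linarith
      nlinarith
end
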